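/- Locality of changes under a single edge insertion (the content of Lemma 8 of the paper): let M be a stable b-matching of G, let e = {u,v} be an unordered pair of distinct vertices with e ∉ E, and let M̃ be a stable b-matching of the graph G + e. Then every vertex that is incident to an edge of the symmetric difference M △ M̃ is connected to u or to v by a path all of whose edges belong to M ∪ M̃. -/
import Mathlib


/-!
Framework: finite simple graph `G` on vertex set `V`, positive edge weights `ω` on
unordered pairs of distinct vertices, capacities `b`, and a strict linear order
`prec` on unordered pairs of distinct vertices refining `ω`
(the paper's tie-breaking rule).  `M` is a set of edges.
-/

variable {V : Type*} [Fintype V] [DecidableEq V]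

/-- Number of edges of `M` incident to vertex `u`. -/
def bDeg (M : Finset (Sym2 V)) (u : V) : ℕ :=
  (M.filter (fun e => u ∈ e)).card

/-- `u` is saturated in `M`: it is incident to exactly `b u` edges of `M`. -/
def Saturated (b : V → ℕ) (M : Finset (Sym2 V)) (u : V) : Prop :=
  bDeg M u = b u

/-- `M` is a `b`-matching of `G`: a set of edges of `G` such that every vertex `u`
is incident to at most `b u` edges of `M`. -/
def IsBMatching (G : SimpleGraph V) (b : V → ℕ) (M : Finset (Sym2 V)) : Prop :=
  (∀ e ∈ M, e ∈ G.edgeSet) ∧ ∀ u : V, bDeg M u ≤ b u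

/-- `M` is a stable `b`-matching of `G` (termination condition of the b-suitor
algorithm): for every non-matching edge `e` of `G` there is an endpoint `x` of `e`
which is saturated and all of whose matched edges beat `e` in the order `prec`. -/
def IsStable (G : SimpleGraph V) (b : V → ℕ) (prec : Sym2 V → Sym2 V → Prop)
    (M : Finset (Sym2 V)) : Prop :=
  IsBMatching G b M ∧
    ∀ e ∈ G.edgeSet, e ∉ M →
      ∃ x ∈ e, Saturated b M x ∧ ∀ f ∈ M, x ∈ f → prec e f


private lemma exists_prec_max {α : Type*} (r : α → α → Prop)
    (hirr : ∀ a, ¬ r a a) (htr : ∀ a b c, r a b → r b c → r a c)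
    (s : Finset α) (hs : s.Nonempty) : ∃ a ∈ s, ∀ b ∈ s, ¬ r a b := by
  classical
  induction s using Finset.induction_on with
  | empty => exact absurd hs (by simp)
  | @insert a s ha ih =>
    rcases s.eq_empty_or_nonempty with rfl | hs'
    · refine ⟨a, by simp, ?_⟩
      intro b hb
      have hb' : b = a := by simpa using hb
      rw [hb']; exact hirr a
    · obtain ⟨m, hm, hmax⟩ := ih hs'
      by_cases hra : r m a
      · refine ⟨a, Finset.mem_insert_self _ _, ?_⟩
        intro b hb hab
        rcases Finset.mem_insert.1 hb with heq | hb'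
        · rw [heq] at hab; exact hirr a hab
        · exact hmax b hb' (htr _ _ _ hra hab)
      · refine ⟨m, Finset.mem_insert_of_mem hm, ?_⟩
        intro b hb
        rcases Finset.mem_insert.1 hb with heq | hb'
        · rw [heq]; exact hra
        · exact hmax b hb'

private lemma bDeg_split (M N : Finset (Sym2 V)) (x : V) :
    bDeg M x = bDeg (M ∩ N) x + bDeg (M \ N) x := by
  classical
  unfold bDeg
  rw [← Finset.card_union_of_disjoint, ← Finset.filter_union]
  · congr 1
    ext a
    simp only [Finset.mem_filter, Finset.mem_union, Finset.mem_inter, Finset.mem_sdiff]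
    tauto
  · exact Finset.disjoint_filter_filter
      (Finset.disjoint_left.2 (fun a haa hb => (Finset.mem_sdiff.1 hb).2 (Finset.mem_inter.1 haa).2))

private lemma count_aux (M N : Finset (Sym2 V)) (x : V) (h : bDeg N x ≤ bDeg M x)
    (hne : ∃ e ∈ N \ M, x ∈ e) : ∃ f ∈ M \ N, x ∈ f := by
  classical
  have h1 : bDeg M x = bDeg (M ∩ N) x + bDeg (M \ N) x := bDeg_split M N x
  have h2 : bDeg N x = bDeg (M ∩ N) x + bDeg (N \ M) x := by
    rw [bDeg_split N M x, Finset.inter_comm]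
  have h3 : 1 ≤ bDeg (N \ M) x := by
    obtain ⟨e, he, hxe⟩ := hne
    exact Finset.card_pos.2 ⟨e, Finset.mem_filter.2 ⟨he, hxe⟩⟩
  have h4 : 1 ≤ bDeg (M \ N) x := by omega
  obtain ⟨f, hf⟩ := Finset.card_pos.1 h4
  exact ⟨f, (Finset.mem_filter.1 hf).1, (Finset.mem_filter.1 hf).2⟩

/-- Lemma 8: locality of changes under a single edge insertion:
every vertex incident to an edge of the symmetric difference of the old and new
stable matchings is connected to an endpoint of the inserted edge by a path whose
edges all lie in the union of the two matchings. -/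
theorem insertion_locality
    (G : SimpleGraph V) (ω : Sym2 V → ℝ) (b : V → ℕ)
    (prec : Sym2 V → Sym2 V → Prop)
    (hω : ∀ e : Sym2 V, ¬ e.IsDiag → 0 < ω e)
    (hirr : ∀ e : Sym2 V, ¬ prec e e)
    (htrans : ∀ e f g : Sym2 V, prec e f → prec f g → prec e g)
    (htotal : ∀ e f : Sym2 V, ¬ e.IsDiag → ¬ f.IsDiag → e ≠ f → prec e f ∨ prec f e)
    (href : ∀ e f : Sym2 V, ¬ e.IsDiag → ¬ f.IsDiag → ω e < ω f → prec e f)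
    (u v : V) (huv : u ≠ v) (hnotE : s(u, v) ∉ G.edgeSet)
    (M : Finset (Sym2 V)) (hM : IsStable G b prec M)
    (Mt : Finset (Sym2 V))
    (hMt : IsStable (G ⊔ SimpleGraph.fromEdgeSet {s(u, v)}) b prec Mt) :
    ∀ w : V, (∃ f ∈ (M \ Mt) ∪ (Mt \ M), w ∈ f) →
      Relation.ReflTransGen (fun a c => s(a, c) ∈ M ∪ Mt) w u ∨
        Relation.ReflTransGen (fun a c => s(a, c) ∈ M ∪ Mt) w v := by
  classical
  intro w hw
  by_contra hcon
  push_neg at hcon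
  obtain ⟨hwu, hwv⟩ := hcon
  set R := Relation.ReflTransGen (fun a c : V => s(a, c) ∈ M ∪ Mt) with hRdef
  -- an edge of M ∪ Mt propagates reachability to all of its endpoints
  have hstep : ∀ e : Sym2 V, e ∈ M ∪ Mt → ∀ x ∈ e, R w x → ∀ y ∈ e, R w y := by
    intro e
    induction e using Sym2.ind with
    | _ a c =>
      intro he x hx hxR y hy
      have hba : s(c, a) ∈ M ∪ Mt := by rwa [Sym2.eq_swap]
      rw [Sym2.mem_iff] at hx hy
      rcases hx with rfl | rfl <;> rcases hy with rfl | rfl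
      · exact hxR
      · exact hxR.tail he
      · exact hxR.tail hba
      · exact hxR
  set S : Finset (Sym2 V) := ((M \ Mt) ∪ (Mt \ M)).filter (fun f => ∃ x ∈ f, R w x) with hSdef
  have hSne : S.Nonempty := by
    obtain ⟨f, hf, hwf⟩ := hw
    exact ⟨f, Finset.mem_filter.2 ⟨hf, w, hwf, Relation.ReflTransGen.refl⟩⟩
  obtain ⟨e, heS, hemax⟩ := exists_prec_max prec hirr htrans S hSne
  obtain ⟨heD, x0, hx0e, hRx0⟩ := Finset.mem_filter.1 heS
  -- e is an edge of M ∪ Mt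
  have heU : e ∈ M ∪ Mt := by
    rcases Finset.mem_union.1 heD with h | h
    · exact Finset.mem_union_left _ (Finset.mem_sdiff.1 h).1
    · exact Finset.mem_union_right _ (Finset.mem_sdiff.1 h).1
  have hall : ∀ y ∈ e, R w y := hstep e heU x0 hx0e hRx0
  rcases Finset.mem_union.1 heD with heMD | heMD
  · -- e ∈ M \ Mt : use stability of Mt
    obtain ⟨heM, heMt⟩ := Finset.mem_sdiff.1 heMD
    have heG : e ∈ G.edgeSet := hM.1.1 e heM
    have heG' : e ∈ (G ⊔ SimpleGraph.fromEdgeSet {s(u, v)}).edgeSet := by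
      rw [SimpleGraph.edgeSet_sup]; exact Or.inl heG
    obtain ⟨x, hxe, hsat, hbeat⟩ := hMt.2 e heG' heMt
    have hdeg : bDeg M x ≤ bDeg Mt x := by
      rw [hsat]; exact hM.1.2 x
    obtain ⟨g, hg, hxg⟩ := count_aux Mt M x hdeg ⟨e, heMD, hxe⟩
    have hgS : g ∈ S := Finset.mem_filter.2
      ⟨Finset.mem_union_right _ hg, x, hxg, hall x hxe⟩
    exact hemax g hgS (hbeat g (Finset.mem_sdiff.1 hg).1 hxg)
  · -- e ∈ Mt \ M
    obtain ⟨heMt, heM⟩ := Finset.mem_sdiff.1 heMD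
    have heG' : e ∈ (G ⊔ SimpleGraph.fromEdgeSet {s(u, v)}).edgeSet := hMt.1.1 e heMt
    rw [SimpleGraph.edgeSet_sup] at heG'
    rcases heG' with heG | hnew
    · obtain ⟨x, hxe, hsat, hbeat⟩ := hM.2 e heG heM
      have hdeg : bDeg Mt x ≤ bDeg M x := by
        rw [hsat]; exact hMt.1.2 x
      obtain ⟨g, hg, hxg⟩ := count_aux M Mt x hdeg ⟨e, heMD, hxe⟩
      have hgS : g ∈ S := Finset.mem_filter.2
        ⟨Finset.mem_union_left _ hg, x, hxg, hall x hxe⟩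
      exact hemax g hgS (hbeat g (Finset.mem_sdiff.1 hg).1 hxg)
    · -- e is the inserted edge: then u would be reachable from w, contradiction
      rw [SimpleGraph.edgeSet_fromEdgeSet] at hnew
      have : e = s(u, v) := hnew.1
      subst this
      exact hwu (hall u (Sym2.mem_mk_left u v))
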